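/- Fix p ∈ {1,2,3} and a₁, a₂, a₃ ∈ ℝ with a₁² + a₂² + a₃² = 1, and let q = a₁i + a₂j + a₃k. Define the linear map f on m by f(Mₚ(w)) = Mₚ(q·w) on mₚ and f = 0 on the other two modules. Then f³ + f = 0, and for all positive reals λ₁, λ₂, λ₃ and all X, Y ∈ m one has g_λ(fX, Y) + g_λ(X, fY) = 0, where g_λ(X,Y) = −8(λ₁·Re tr(X₁Y₁) + λ₂·Re tr(X₂Y₂) + λ₃·Re tr(X₃Y₃)) and Xᵢ denotes the mᵢ-component. Hence (f, g_λ) is a metric f-structure. -/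

import Mathlib

open Quaternion

namespace Sp3

/-- `M₁(x) ∈ sp(3)` has entry `x` in position `(1,2)`, `−x̄` in position `(2,1)`, zeros
elsewhere (indices `0,1,2` correspond to the paper's `1,2,3`). -/
noncomputable def M1 (x : ℍ[ℝ]) : Matrix (Fin 3) (Fin 3) ℍ[ℝ] :=
  Matrix.single 0 1 x - Matrix.single 1 0 (star x)

/-- `M₂(y) ∈ sp(3)` has entry `y` in position `(1,3)`, `−ȳ` in position `(3,1)`. -/
noncomputable def M2 (y : ℍ[ℝ]) : Matrix (Fin 3) (Fin 3) ℍ[ℝ] :=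
  Matrix.single 0 2 y - Matrix.single 2 0 (star y)

/-- `M₃(z) ∈ sp(3)` has entry `z` in position `(2,3)`, `−z̄` in position `(3,2)`. -/
noncomputable def M3 (z : ℍ[ℝ]) : Matrix (Fin 3) (Fin 3) ℍ[ℝ] :=
  Matrix.single 1 2 z - Matrix.single 2 1 (star z)

/-- Membership in `h ⊂ sp(3)`: the diagonal matrices whose diagonal entries are purely
imaginary quaternions. -/
def InH (X : Matrix (Fin 3) (Fin 3) ℍ[ℝ]) : Prop :=
  (∀ i j : Fin 3, i ≠ j → X i j = 0) ∧ (∀ i : Fin 3, (X i i).re = 0)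

/-- The element of `m = m₁ ⊕ m₂ ⊕ m₃` with coordinates `(x, y, z) ∈ ℍ³`. -/
noncomputable def Mm (v : ℍ[ℝ] × ℍ[ℝ] × ℍ[ℝ]) : Matrix (Fin 3) (Fin 3) ℍ[ℝ] :=
  M1 v.1 + M2 v.2.1 + M3 v.2.2

/-- The off-diagonal part of `X`, i.e. the projection of `X ∈ sp(3)` onto `m` along `h`. -/
noncomputable def offDiag (X : Matrix (Fin 3) (Fin 3) ℍ[ℝ]) : Matrix (Fin 3) (Fin 3) ℍ[ℝ] :=
  Matrix.of fun i j => if i = j then 0 else X i j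

end Sp3

namespace Sp3

/-- The `f`-structure determined by `p ∈ {1,2,3}` and a purely imaginary unit quaternion
`q`: in coordinates it multiplies the `mₚ`-coordinate by `q` on the left and kills the
other two modules. -/
noncomputable def fP : Fin 3 → ℍ[ℝ] → (ℍ[ℝ] × ℍ[ℝ] × ℍ[ℝ] → ℍ[ℝ] × ℍ[ℝ] × ℍ[ℝ])
  | 0, q => fun v => (q * v.1, 0, 0)
  | 1, q => fun v => (0, q * v.2.1, 0)
  | 2, q => fun v => (0, 0, q * v.2.2)

/-- The invariant metric `g_λ` with characteristic numbers `(λ₁, λ₂, λ₃)`: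
`g_λ(X,Y) = −8(λ₁·Re tr(X₁Y₁) + λ₂·Re tr(X₂Y₂) + λ₃·Re tr(X₃Y₃))`, in coordinates. -/
noncomputable def gl (l1 l2 l3 : ℝ) (v w : ℍ[ℝ] × ℍ[ℝ] × ℍ[ℝ]) : ℝ :=
  -8 * (l1 * ((M1 v.1 * M1 w.1).trace).re + l2 * ((M2 v.2.1 * M2 w.2.1).trace).re +
    l3 * ((M3 v.2.2 * M3 w.2.2).trace).re)

end Sp3

set_option maxHeartbeats 1000000 in
open Sp3 in
/-- fix `p ∈ {1,2,3}` and `a₁, a₂, a₃ ∈ ℝ` with `a₁² + a₂² + a₃² = 1`, and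
let `q = a₁i + a₂j + a₃k`.  The map `f` with `f(Mₚ(w)) = Mₚ(q·w)` on `mₚ` and `f = 0` on
the other two modules satisfies `f³ + f = 0`, and for all positive `λ₁, λ₂, λ₃` and all
`X, Y ∈ m` one has `g_λ(fX, Y) + g_λ(X, fY) = 0`.  Hence `(f, g_λ)` is a metric
`f`-structure. -/
theorem statement15 (p : Fin 3) (a1 a2 a3 : ℝ) (ha : a1 ^ 2 + a2 ^ 2 + a3 ^ 2 = 1)
    (q : ℍ[ℝ]) (hq : q = ⟨0, a1, a2, a3⟩) :
    (∀ v : ℍ[ℝ] × ℍ[ℝ] × ℍ[ℝ], fP p q (fP p q (fP p q v)) + fP p q v = 0) ∧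
    (∀ l1 l2 l3 : ℝ, 0 < l1 → 0 < l2 → 0 < l3 →
      ∀ v w : ℍ[ℝ] × ℍ[ℝ] × ℍ[ℝ],
        gl l1 l2 l3 (fP p q v) w + gl l1 l2 l3 v (fP p q w) = 0) := by
  have hqq : q * q = -1 := by
    obtain ⟨h0, h1, h2, h3⟩ : q.re = 0 ∧ q.imI = a1 ∧ q.imJ = a2 ∧ q.imK = a3 := by
      subst hq; exact ⟨rfl, rfl, rfl, rfl⟩
    ext <;>
      simp [Quaternion.re_mul, Quaternion.imI_mul, Quaternion.imJ_mul,
        Quaternion.imK_mul, h0, h1, h2, h3] <;> nlinarith [ha]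
  have key : ∀ x y : ℍ[ℝ], ((q * x) * star y).re + (x * star (q * y)).re = 0 := by
    intro x y
    obtain ⟨h0, h1, h2, h3⟩ : q.re = 0 ∧ q.imI = a1 ∧ q.imJ = a2 ∧ q.imK = a3 := by
      subst hq; exact ⟨rfl, rfl, rfl, rfl⟩
    simp [Quaternion.re_mul, Quaternion.imI_mul, Quaternion.imJ_mul,
      Quaternion.imK_mul, h0, h1, h2, h3]
    ring
  have htr1 : ∀ x y : ℍ[ℝ], ((M1 x * M1 y).trace).re = -(x * star y).re - (star x * y).re := by
    intro x y
    simp [M1, Matrix.trace, Fin.sum_univ_three, Matrix.mul_apply,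
      Matrix.single, Matrix.sub_apply]
    ring
  have htr2 : ∀ x y : ℍ[ℝ], ((M2 x * M2 y).trace).re = -(x * star y).re - (star x * y).re := by
    intro x y
    simp [M2, Matrix.trace, Fin.sum_univ_three, Matrix.mul_apply,
      Matrix.single, Matrix.sub_apply]
    ring
  have htr3 : ∀ x y : ℍ[ℝ], ((M3 x * M3 y).trace).re = -(x * star y).re - (star x * y).re := by
    intro x y
    simp [M3, Matrix.trace, Fin.sum_univ_three, Matrix.mul_apply,
      Matrix.single, Matrix.sub_apply]
    ring
  have keystar : ∀ x y : ℍ[ℝ], (star (q * x) * y).re + (star x * (q * y)).re = 0 := by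
    intro x y
    obtain ⟨h0, h1, h2, h3⟩ : q.re = 0 ∧ q.imI = a1 ∧ q.imJ = a2 ∧ q.imK = a3 := by
      subst hq; exact ⟨rfl, rfl, rfl, rfl⟩
    simp [Quaternion.re_mul, Quaternion.imI_mul, Quaternion.imJ_mul,
      Quaternion.imK_mul, h0, h1, h2, h3]
    ring
  constructor
  · intro v
    fin_cases p <;>
      simp only [fP, Prod.ext_iff, Prod.mk_add_mk, ← mul_assoc, hqq, Prod.mk_eq_zero] <;>
      constructor <;> simp
  · intro l1 l2 l3 _ _ _ v w
    fin_cases p <;>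
      simp only [fP, gl, htr1, htr2, htr3, star_zero, zero_mul, mul_zero,
        Quaternion.re_zero, neg_zero, sub_zero, zero_sub, add_zero, zero_add] <;>
      first
      | linear_combination (8*l1) * key v.1 w.1 + (8*l1) * keystar v.1 w.1
      | linear_combination (8*l2) * key v.2.1 w.2.1 + (8*l2) * keystar v.2.1 w.2.1
      | linear_combination (8*l3) * key v.2.2 w.2.2 + (8*l3) * keystar v.2.2 w.2.2
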